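/- arXiv:2605.05422 — 2 statements merged into one kernel-verified Lean document; each statement's English description precedes it below -/
import Mathlib

section
/- Let ρ ∈ (0,1], let v be a unit vector in ℝ³, and let T = T(v, y₀, s₀, C₁ρ, L) be a tube of radius C₁ρ and length parameter L ≥ 1 with axis parallel to v. Let φ ∈ L²(ℝ³) satisfy |φ(x)| ≤ A ρ⁻¹ (1 + dist(x,T)/ρ)^{−N} for all x ∈ ℝ³, with constants A ≥ 1 and N > 2. Then for every positive Borel measure μ on ℝ³, ∫_{ℝ³} |φ(x)|² dμ(x) ≤ C A² ρ⁻² Σ_{k=0}^{∞} 2^{−2Nk} (π_v)_#μ(B_{v^⊥}(y₀, C·2^k ρ)), where C ≥ 1 depends only on N, C₁, and L. -/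
noncomputable section
open MeasureTheory Metric Set Function
open scoped ENNReal RealInnerProductSpace

abbrev E3 : Type := EuclideanSpace ℝ (Fin 3)

/-- The tube `T(v, y₀, s₀, r, L) = {y + s v : y ∈ v^⊥, |y − y₀| ≤ r, |s − s₀| ≤ L}`. -/
def tube (v y₀ : E3) (s₀ r L : ℝ) : Set E3 :=
  {x | ‖x - ⟪x, v⟫ • v - y₀‖ ≤ r ∧ |⟪x, v⟫ - s₀| ≤ L}

/-- Orthogonal projection onto the plane `v^⊥`. -/
def projPerp (v x : E3) : E3 := x - ⟪x, v⟫ • v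

lemma sub_proj_norm_le (v : E3) (hv : ‖v‖ = 1) (w : E3) : ‖w - ⟪w, v⟫ • v‖ ≤ ‖w‖ := by
  have hortho : ⟪w - ⟪w, v⟫ • v, ⟪w, v⟫ • v⟫ = 0 := by
    simp only [inner_sub_left, real_inner_smul_left, real_inner_smul_right,
      real_inner_self_eq_norm_sq, norm_smul, Real.norm_eq_abs, hv, mul_one, sq_abs]
    ring
  have h := norm_add_sq_real (w - ⟪w, v⟫ • v) (⟪w, v⟫ • v)
  rw [sub_add_cancel, hortho] at h
  nlinarith [norm_nonneg (w - ⟪w, v⟫ • v), norm_nonneg w, norm_nonneg (⟪w, v⟫ • v),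
    sq_nonneg ‖⟪w, v⟫ • v‖]

lemma projPerp_lip (v : E3) (hv : ‖v‖ = 1) (a b : E3) :
    ‖projPerp v a - projPerp v b‖ ≤ ‖a - b‖ := by
  have : projPerp v a - projPerp v b = (a - b) - ⟪a - b, v⟫ • v := by
    simp only [projPerp, inner_sub_left, sub_smul]
    abel
  rw [this]
  exact sub_proj_norm_le v hv (a - b)

lemma projPerp_continuous (v : E3) : Continuous (projPerp v) := by
  unfold projPerp
  exact continuous_id.sub (Continuous.smul (f := fun x : E3 => ⟪x, v⟫) (g := fun _ : E3 => v) (continuous_id.inner continuous_const) continuous_const)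

/-- reduction of tubular energy to dyadic projected masses. -/
theorem wave_packet_energy_projection (N C₁ L : ℝ) (hN : 2 < N) (hC₁ : 1 ≤ C₁)
    (hL : 1 ≤ L) :
    ∃ C : ℝ, 1 ≤ C ∧
      ∀ ρ : ℝ, ρ ∈ Set.Ioc (0 : ℝ) 1 →
      ∀ v y₀ : E3, ‖v‖ = 1 → ⟪y₀, v⟫ = 0 → ∀ s₀ : ℝ,
      ∀ A : ℝ, 1 ≤ A → ∀ φ : E3 → ℂ, MemLp φ 2 volume →
        (∀ x : E3,
          ‖φ x‖ ≤ A * ρ⁻¹ * (1 + infDist x (tube v y₀ s₀ (C₁ * ρ) L) / ρ) ^ (-N)) →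
        ∀ μ : Measure E3,
          (∫⁻ x, ((‖φ x‖₊ : ℝ≥0∞)) ^ 2 ∂μ) ≤
            ENNReal.ofReal (C * A ^ 2 / ρ ^ 2) *
              ∑' k : ℕ, ENNReal.ofReal ((2 : ℝ) ^ (-(2 * N * (k : ℝ)))) *
                Measure.map (projPerp v) μ (Metric.closedBall y₀ (C * 2 ^ k * ρ)) := by
  refine ⟨C₁ + 2, by linarith, ?_⟩
  rintro ρ ⟨hρ0, hρ1⟩ v y₀ hv hy₀ s₀ A hA φ hφ hbound μ
  set C : ℝ := C₁ + 2 with hC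
  set T : Set E3 := tube v y₀ s₀ (C₁ * ρ) L with hT
  have hTne : T.Nonempty := by
    refine ⟨y₀ + s₀ • v, ?_, ?_⟩
    · have hin : ⟪y₀ + s₀ • v, v⟫ = s₀ := by
        rw [inner_add_left, hy₀, real_inner_smul_left, real_inner_self_eq_norm_sq, hv]
        ring
      rw [hin]
      simp only [add_sub_cancel_right, sub_self, norm_zero]
      positivity
    · have hin : ⟪y₀ + s₀ • v, v⟫ = s₀ := by
        rw [inner_add_left, hy₀, real_inner_smul_left, real_inner_self_eq_norm_sq, hv]
        ring
      rw [hin]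
      simp [hL.trans' (by norm_num : (0:ℝ) ≤ 1)]
  have hm : Measurable (projPerp v) := (projPerp_continuous v).measurable
  -- key pointwise bound
  have key : ∀ x : E3, (‖φ x‖₊ : ℝ≥0∞) ^ 2 ≤
      ∑' k : ℕ, (projPerp v ⁻¹' closedBall y₀ (C * 2 ^ k * ρ)).indicator
        (fun _ => ENNReal.ofReal (A ^ 2 / ρ ^ 2) *
          ENNReal.ofReal ((2 : ℝ) ^ (-(2 * N * (k : ℝ))))) x := by
    intro x
    set d : ℝ := infDist x T with hd
    have hd0 : 0 ≤ d := infDist_nonneg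
    set t : ℝ := 1 + d / ρ with ht
    have hdρ : 0 ≤ d / ρ := div_nonneg hd0 hρ0.le
    have ht1 : 1 ≤ t := by rw [ht]; linarith
    have ht0 : 0 < t := by linarith
    set k : ℕ := ⌊Real.logb 2 t⌋₊ with hk
    have hlogb0 : 0 ≤ Real.logb 2 t := Real.logb_nonneg one_lt_two ht1
    have h2k : (2 : ℝ) ^ (k : ℝ) ≤ t := by
      calc (2 : ℝ) ^ (k : ℝ) ≤ (2 : ℝ) ^ (Real.logb 2 t) :=
            Real.rpow_le_rpow_of_exponent_le one_le_two (Nat.floor_le hlogb0)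
        _ = t := Real.rpow_logb (by norm_num) (by norm_num) ht0
    have hk2 : t < (2 : ℝ) ^ ((k : ℝ) + 1) := by
      calc t = (2 : ℝ) ^ (Real.logb 2 t) := (Real.rpow_logb (by norm_num) (by norm_num) ht0).symm
        _ < (2 : ℝ) ^ ((k : ℝ) + 1) :=
            Real.rpow_lt_rpow_of_exponent_lt one_lt_two (Nat.lt_floor_add_one _)
    have hpow : (2 : ℝ) ^ (k : ℝ) = (2 : ℝ) ^ k := Real.rpow_natCast 2 k
    have hP1 : (1 : ℝ) ≤ (2 : ℝ) ^ k := one_le_pow₀ one_le_two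
    -- membership in the k-th set
    have hmem : projPerp v x ∈ closedBall y₀ (C * 2 ^ k * ρ) := by
      have hproj : ‖projPerp v x - y₀‖ ≤ d + C₁ * ρ := by
        have hle : ∀ z ∈ T, ‖projPerp v x - y₀‖ - C₁ * ρ ≤ dist x z := by
          intro z hz
          have hz1 : ‖z - ⟪z, v⟫ • v - y₀‖ ≤ C₁ * ρ := hz.1
          have hlip := projPerp_lip v hv x z
          have : ‖projPerp v x - y₀‖ ≤ ‖projPerp v x - projPerp v z‖ + ‖projPerp v z - y₀‖ :=
            norm_sub_le_norm_sub_add_norm_sub _ _ _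
          have hz1' : ‖projPerp v z - y₀‖ ≤ C₁ * ρ := hz1
          have hdist : ‖x - z‖ = dist x z := (dist_eq_norm x z).symm
          linarith [hlip, this, hz1', hdist.le, hdist.ge]
        by_contra hcon
        push_neg at hcon
        have hlt : infDist x T < ‖projPerp v x - y₀‖ - C₁ * ρ := by
          rw [← hd]; linarith
        obtain ⟨z, hz, hdz⟩ := (infDist_lt_iff hTne).1 hlt
        exact absurd hdz (not_lt.2 (hle z hz))
      have hdlt : d < 2 * (2 : ℝ) ^ k * ρ := by
        have h2 : (2 : ℝ) ^ ((k : ℝ) + 1) = 2 * (2 : ℝ) ^ k := by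
          rw [Real.rpow_add (by norm_num), hpow, Real.rpow_one]; ring
        have : 1 + d / ρ < 2 * (2 : ℝ) ^ k := by rw [← h2]; exact hk2
        have hdiv : d / ρ < 2 * (2 : ℝ) ^ k - 1 := by linarith
        have := (div_lt_iff₀ hρ0).1 hdiv
        nlinarith
      rw [mem_closedBall, dist_eq_norm]
      have hC2 : C * 2 ^ k * ρ = C₁ * (2:ℝ)^k * ρ + 2 * (2:ℝ)^k * ρ := by rw [hC]; ring
      have h5 : C₁ * ρ ≤ C₁ * 2 ^ k * ρ := by
        nlinarith [mul_nonneg (mul_nonneg (by linarith : (0:ℝ) ≤ C₁)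
          (by linarith : (0:ℝ) ≤ (2:ℝ) ^ k - 1)) hρ0.le]
      linarith [hproj, hdlt, h5]
    -- value bound
    have hval : ‖φ x‖ ^ 2 ≤ A ^ 2 / ρ ^ 2 * (2 : ℝ) ^ (-(2 * N * (k : ℝ))) := by
      have hb := hbound x
      have htpow : (0 : ℝ) < t ^ (-N) := Real.rpow_pos_of_pos ht0 _
      have hAρ : (0 : ℝ) < A * ρ⁻¹ := by positivity
      have hsq : ‖φ x‖ ^ 2 ≤ (A * ρ⁻¹) ^ 2 * (t ^ (-N)) ^ 2 := by
        rw [← mul_pow]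
        exact pow_le_pow_left₀ (norm_nonneg _) hb 2
      have h1 : (t ^ (-N) : ℝ) ^ 2 = t ^ (-(2 * N)) := by
        rw [← Real.rpow_natCast (t ^ (-N)) 2, ← Real.rpow_mul ht0.le]
        norm_num; ring_nf
      have h2 : t ^ (-(2 * N)) ≤ ((2 : ℝ) ^ (k : ℝ)) ^ (-(2 * N)) :=
        Real.rpow_le_rpow_of_nonpos (by positivity) h2k (by linarith)
      have h3 : ((2 : ℝ) ^ (k : ℝ)) ^ (-(2 * N)) = (2 : ℝ) ^ (-(2 * N * (k : ℝ))) := by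
        rw [← Real.rpow_mul (by norm_num : (0:ℝ) ≤ 2)]
        congr 1
        ring
      have h4 : (A * ρ⁻¹) ^ 2 = A ^ 2 / ρ ^ 2 := by
        field_simp
      calc ‖φ x‖ ^ 2 ≤ (A * ρ⁻¹) ^ 2 * (t ^ (-N)) ^ 2 := hsq
        _ = A ^ 2 / ρ ^ 2 * t ^ (-(2 * N)) := by rw [h4, h1]
        _ ≤ A ^ 2 / ρ ^ 2 * (2 : ℝ) ^ (-(2 * N * (k : ℝ))) := by
            rw [← h3]
            exact mul_le_mul_of_nonneg_left h2 (by positivity)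
    -- conclude
    have hterm : (‖φ x‖₊ : ℝ≥0∞) ^ 2 ≤
        (projPerp v ⁻¹' closedBall y₀ (C * 2 ^ k * ρ)).indicator
          (fun _ => ENNReal.ofReal (A ^ 2 / ρ ^ 2) *
            ENNReal.ofReal ((2 : ℝ) ^ (-(2 * N * (k : ℝ))))) x := by
      rw [Set.indicator_of_mem (Set.mem_preimage.2 hmem)]
      rw [← ENNReal.ofReal_mul (by positivity)]
      calc (‖φ x‖₊ : ℝ≥0∞) ^ 2 = ENNReal.ofReal (‖φ x‖ ^ 2) := by
            rw [ENNReal.ofReal_pow (norm_nonneg _), ofReal_norm, enorm_eq_nnnorm]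
        _ ≤ _ := ENNReal.ofReal_le_ofReal hval
    exact hterm.trans (ENNReal.le_tsum k)
  -- integrate
  have hSk : ∀ k : ℕ, MeasurableSet (projPerp v ⁻¹' closedBall y₀ (C * 2 ^ k * ρ)) :=
    fun k => hm measurableSet_closedBall
  calc (∫⁻ x, ((‖φ x‖₊ : ℝ≥0∞)) ^ 2 ∂μ)
      ≤ ∫⁻ x, ∑' k : ℕ, (projPerp v ⁻¹' closedBall y₀ (C * 2 ^ k * ρ)).indicator
          (fun _ => ENNReal.ofReal (A ^ 2 / ρ ^ 2) *
            ENNReal.ofReal ((2 : ℝ) ^ (-(2 * N * (k : ℝ))))) x ∂μ := lintegral_mono key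
    _ = ∑' k : ℕ, ∫⁻ x, (projPerp v ⁻¹' closedBall y₀ (C * 2 ^ k * ρ)).indicator
          (fun _ => ENNReal.ofReal (A ^ 2 / ρ ^ 2) *
            ENNReal.ofReal ((2 : ℝ) ^ (-(2 * N * (k : ℝ))))) x ∂μ :=
        lintegral_tsum (fun k => ((measurable_const.indicator (hSk k))).aemeasurable)
    _ = ∑' k : ℕ, (ENNReal.ofReal (A ^ 2 / ρ ^ 2) *
          ENNReal.ofReal ((2 : ℝ) ^ (-(2 * N * (k : ℝ))))) *
          μ (projPerp v ⁻¹' closedBall y₀ (C * 2 ^ k * ρ)) := by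
        congr 1; funext k
        exact lintegral_indicator_const (hSk k) _
    _ = ENNReal.ofReal (A ^ 2 / ρ ^ 2) *
        ∑' k : ℕ, ENNReal.ofReal ((2 : ℝ) ^ (-(2 * N * (k : ℝ)))) *
          Measure.map (projPerp v) μ (closedBall y₀ (C * 2 ^ k * ρ)) := by
        rw [← ENNReal.tsum_mul_left]
        congr 1; funext k
        rw [Measure.map_apply hm measurableSet_closedBall, mul_assoc]
    _ ≤ ENNReal.ofReal (C * A ^ 2 / ρ ^ 2) *
        ∑' k : ℕ, ENNReal.ofReal ((2 : ℝ) ^ (-(2 * N * (k : ℝ)))) *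
          Measure.map (projPerp v) μ (closedBall y₀ (C * 2 ^ k * ρ)) := by
        refine mul_le_mul_left (ENNReal.ofReal_le_ofReal ?_) _
        have hC1 : (1 : ℝ) ≤ C := by rw [hC]; linarith
        rw [mul_div_assoc]
        exact le_mul_of_one_le_left (by positivity) hC1
end
end

section
/- Let ρ ∈ (0,1], let v be a unit vector in ℝ³, and let T = T(v, y₀, s₀, C₁ρ, L) be a tube of radius C₁ρ and length parameter L ≥ 1 with axis parallel to v. Let φ ∈ L²(ℝ³) satisfy |φ(x)| ≤ A ρ⁻¹ (1 + dist(x,T)/ρ)^{−N} for all x ∈ ℝ³, with A ≥ 1 and N > 2. Let μ be a positive Borel measure on ℝ³ supported in a set of diameter at most D, and suppose there exist β ∈ (0,2] and C_proj > 0 such that (π_v)_#μ(B_{v^⊥}(z,r)) ≤ C_proj r^β for every z ∈ v^⊥ and every 0 < r ≤ 1. Then ∫_{ℝ³} |φ(x)|² dμ(x) ≤ C A² C_proj ρ^{β−2}, where C ≥ 1 depends only on N, β, C₁, L, and D. -/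
noncomputable section
open MeasureTheory Metric Set Function
open scoped ENNReal RealInnerProductSpace

variable {v : E3}

lemma inner_projPerp (hv : ‖v‖ = 1) (x : E3) : ⟪projPerp v x, v⟫ = 0 := by
  have h : ⟪v, v⟫ = 1 := by
    rw [real_inner_self_eq_norm_sq, hv]; norm_num
  rw [projPerp, inner_sub_left, real_inner_smul_left, h, mul_one, sub_self]

lemma projPerp_sub (a b : E3) : projPerp v (a - b) = projPerp v a - projPerp v b := by
  simp only [projPerp, inner_sub_left, sub_smul]; abel

lemma projPerp_eq_self {x : E3} (hx : ⟪x, v⟫ = 0) : projPerp v x = x := by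
  simp [projPerp, hx]

lemma norm_projPerp_le (hv : ‖v‖ = 1) (x : E3) : ‖projPerp v x‖ ≤ ‖x‖ := by
  have h : ‖projPerp v x‖ ^ 2 ≤ ‖x‖ ^ 2 := by
    have : ‖x - ⟪x, v⟫ • v‖ ^ 2 = ‖x‖ ^ 2 - 2 * ⟪x, ⟪x, v⟫ • v⟫ + ‖⟪x, v⟫ • v‖ ^ 2 :=
      norm_sub_sq_real x _
    rw [projPerp, this, real_inner_smul_right, norm_smul, mul_pow, Real.norm_eq_abs, sq_abs, hv]
    nlinarith [sq_abs (inner ℝ x v : ℝ), sq_nonneg (inner ℝ x v : ℝ)]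
  nlinarith [norm_nonneg (projPerp v x), norm_nonneg x]

lemma measurable_projPerp : Measurable (projPerp v) := by
  have : Continuous (projPerp v) := by
    unfold projPerp
    exact continuous_id.sub (by fun_prop)
  exact this.measurable

lemma abs_coord_le_norm (w : E3) (i : Fin 3) : |w i| ≤ ‖w‖ := by
  rw [EuclideanSpace.norm_eq]
  have : |w i| = Real.sqrt (‖w i‖ ^ 2) := by
    rw [Real.sqrt_sq_eq_abs]; simp
  rw [this]
  apply Real.sqrt_le_sqrt
  exact Finset.single_le_sum (f := fun i => ‖w i‖ ^ 2) (fun j _ => sq_nonneg _) (Finset.mem_univ i)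

/-- grid point -/
def gridPt (j : Fin 3 → ℤ) : E3 := (WithLp.equiv 2 (Fin 3 → ℝ)).symm (fun i => (j i : ℝ) / 2)

lemma gridPt_apply (j : Fin 3 → ℤ) (i : Fin 3) : gridPt j i = (j i : ℝ) / 2 := rfl

lemma cover_bound (hv : ‖v‖ = 1) (μ : Measure E3) (Cb : ℝ≥0∞)
    (h1 : ∀ c : E3, ⟪c, v⟫ = 0 → μ (projPerp v ⁻¹' closedBall c 1) ≤ Cb)
    (z : E3) (hz : ⟪z, v⟫ = 0) (m : ℝ) (hm : 1 ≤ m) :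
    μ (projPerp v ⁻¹' closedBall z m) ≤ ENNReal.ofReal (729 * m ^ 3) * Cb := by
  set n : ℕ := ⌈2 * m⌉₊ + 1 with hn
  set J : Finset (Fin 3 → ℤ) := Fintype.piFinset fun _ : Fin 3 => Finset.Icc (-(n : ℤ)) n with hJ
  -- the covering
  have hsub : projPerp v ⁻¹' closedBall z m ⊆
      ⋃ j ∈ J, projPerp v ⁻¹' closedBall (z + projPerp v (gridPt j)) 1 := by
    intro x hx
    simp only [mem_preimage, mem_closedBall, dist_eq_norm] at hx
    set w : E3 := projPerp v x - z with hw
    have hwnorm : ‖w‖ ≤ m := hx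
    set j : Fin 3 → ℤ := fun i => ⌊2 * w i⌋ with hj
    have hjmem : j ∈ J := by
      simp only [hJ, Fintype.mem_piFinset, Finset.mem_Icc]
      intro i
      have h1' : |w i| ≤ m := (abs_coord_le_norm w i).trans hwnorm
      have h2 : (2:ℝ) * m ≤ (⌈2 * m⌉₊ : ℝ) + 1 := by
        linarith [Nat.le_ceil (2 * m)]
      cases' abs_le.mp h1' with hl hr
      constructor
      · rw [Int.le_floor]
        push_cast [hn]
        linarith
      · have h7 : ⌊(2:ℝ) * w i⌋ ≤ ⌊((n:ℤ) : ℝ)⌋ := Int.floor_le_floor (by push_cast [hn]; linarith)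
        rwa [Int.floor_intCast] at h7
    refine mem_biUnion hjmem ?_
    simp only [mem_preimage, mem_closedBall, dist_eq_norm]
    have hwplane : ⟪w, v⟫ = 0 := by
      rw [hw, inner_sub_left, inner_projPerp hv, hz, sub_zero]
    have key : projPerp v x - (z + projPerp v (gridPt j)) = projPerp v (w - gridPt j) := by
      rw [projPerp_sub, projPerp_eq_self hwplane, hw]; abel
    rw [key]
    refine (norm_projPerp_le hv _).trans ?_
    have hcoord : ∀ i, ‖(w - gridPt j) i‖ ^ 2 ≤ (1/2 : ℝ)^2 := by
      intro i
      have h4 : (j i : ℝ) ≤ 2 * w i := Int.floor_le _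
      have h5 : 2 * w i < j i + 1 := Int.lt_floor_add_one _
      have : (w - gridPt j) i = w i - (j i : ℝ)/2 := by
        simp [gridPt_apply, PiLp.sub_apply]
      rw [this, Real.norm_eq_abs, sq_abs]
      nlinarith
    rw [EuclideanSpace.norm_eq]
    have : ∑ i, ‖(w - gridPt j) i‖ ^ 2 ≤ 3 * (1/2:ℝ)^2 := by
      calc ∑ i, ‖(w - gridPt j) i‖ ^ 2 ≤ ∑ _i : Fin 3, (1/2:ℝ)^2 :=
            Finset.sum_le_sum fun i _ => hcoord i
        _ = 3 * (1/2:ℝ)^2 := by norm_num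
    calc Real.sqrt (∑ i, ‖(w - gridPt j) i‖ ^ 2) ≤ Real.sqrt 1 :=
          Real.sqrt_le_sqrt (by linarith)
      _ = 1 := Real.sqrt_one
  -- count
  have hcount : (J.card : ℝ≥0∞) ≤ ENNReal.ofReal (729 * m ^ 3) := by
    have hcard : J.card = (2 * n + 1) ^ 3 := by
      rw [hJ, Fintype.card_piFinset]
      have hi : (Finset.Icc (-(n:ℤ)) (n:ℤ)).card = 2 * n + 1 := by
        rw [Int.card_Icc]; omega
      simp [hi, Finset.prod_const]
    have hreal : ((2 * n + 1 : ℕ) : ℝ) ≤ 9 * m := by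
      have h6 : (⌈2*m⌉₊ : ℝ) < 2*m + 1 := Nat.ceil_lt_add_one (by linarith)
      push_cast [hn]
      linarith
    rw [hcard]
    calc ((((2 * n + 1) ^ 3 : ℕ)) : ℝ≥0∞) = ENNReal.ofReal (((2 * n + 1 : ℕ) : ℝ) ^ 3) := by
          rw [← ENNReal.ofReal_natCast]; push_cast; ring_nf
      _ ≤ ENNReal.ofReal (729 * m ^ 3) := by
          apply ENNReal.ofReal_le_ofReal
          have : ((2 * n + 1 : ℕ) : ℝ) ^ 3 ≤ (9 * m) ^ 3 := by
            apply pow_le_pow_left₀ (by positivity) hreal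
          nlinarith [this]
  calc μ (projPerp v ⁻¹' closedBall z m)
      ≤ μ (⋃ j ∈ J, projPerp v ⁻¹' closedBall (z + projPerp v (gridPt j)) 1) :=
        measure_mono hsub
    _ ≤ ∑ j ∈ J, μ (projPerp v ⁻¹' closedBall (z + projPerp v (gridPt j)) 1) :=
        measure_biUnion_finset_le J _
    _ ≤ ∑ _j ∈ J, Cb := Finset.sum_le_sum fun j _ => h1 _ (by
        rw [inner_add_left, hz, inner_projPerp hv, add_zero])
    _ = J.card • Cb := (Finset.sum_const Cb)
    _ = (J.card : ℝ≥0∞) * Cb := nsmul_eq_mul _ _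
    _ ≤ ENNReal.ofReal (729 * m ^ 3) * Cb := mul_le_mul_left hcount _


/-- projective bound for the energy of one wave packet. -/
theorem wave_packet_projective_bound (N β C₁ L D : ℝ) (hN : 2 < N)
    (hβ : β ∈ Set.Ioc (0 : ℝ) 2) (hC₁ : 1 ≤ C₁) (hL : 1 ≤ L) (hD : 0 < D) :
    ∃ C : ℝ, 1 ≤ C ∧
      ∀ ρ : ℝ, ρ ∈ Set.Ioc (0 : ℝ) 1 →
      ∀ v y₀ : E3, ‖v‖ = 1 → ⟪y₀, v⟫ = 0 → ∀ s₀ : ℝ,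
      ∀ A : ℝ, 1 ≤ A → ∀ φ : E3 → ℂ, MemLp φ 2 volume →
        (∀ x : E3,
          ‖φ x‖ ≤ A * ρ⁻¹ * (1 + infDist x (tube v y₀ s₀ (C₁ * ρ) L) / ρ) ^ (-N)) →
        ∀ μ : Measure E3,
          -- μ is supported in a set of diameter at most D
          (∃ s : Set E3, Metric.diam s ≤ D ∧ μ sᶜ = 0) →
          ∀ Cproj : ℝ, 0 < Cproj →
            -- projective hypothesis with exponent β
            (∀ z : E3, ⟪z, v⟫ = 0 → ∀ r : ℝ, r ∈ Set.Ioc (0 : ℝ) 1 →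
              Measure.map (projPerp v) μ (Metric.closedBall z r) ≤
                ENNReal.ofReal (Cproj * r ^ β)) →
            (∫⁻ x, ((‖φ x‖₊ : ℝ≥0∞)) ^ 2 ∂μ) ≤
              ENNReal.ofReal (C * A ^ 2 * Cproj * ρ ^ (β - 2)) := by

  obtain ⟨hβ0, hβ2⟩ := hβ
  -- summability of the series
  have hsummable : Summable (fun k : ℕ => ((k : ℝ) + 1) ^ (3 - 2 * N)) := by
    have h0 : Summable (fun n : ℕ => (n : ℝ) ^ (3 - 2 * N)) :=
      Real.summable_nat_rpow.mpr (by linarith)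
    have h1 := (summable_nat_add_iff (f := fun n : ℕ => (n : ℝ) ^ (3 - 2 * N)) 1).mpr h0
    convert h1 using 2 with k
    · rfl
    push_cast
    ring_nf
  set S : ℝ := ∑' k : ℕ, ((k : ℝ) + 1) ^ (3 - 2 * N) with hS
  have hS0 : 0 ≤ S := tsum_nonneg fun k => Real.rpow_nonneg (by positivity) _
  refine ⟨max 1 (5832 * C₁ ^ 3 * S), le_max_left _ _, ?_⟩
  intro ρ hρ v y₀ hv hy₀ s₀ A hA φ hφ hφb μ hμsupp Cproj hCproj hproj
  obtain ⟨hρ0, hρ1⟩ := hρ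
  have hvv : ⟪v, v⟫ = 1 := by
    rw [real_inner_self_eq_norm_sq, hv]; norm_num
  set T := tube v y₀ s₀ (C₁ * ρ) L with hT
  have hTne : T.Nonempty := by
    refine ⟨y₀ + s₀ • v, ?_, ?_⟩
    · have : ⟪y₀ + s₀ • v, v⟫ = s₀ := by
        rw [inner_add_left, real_inner_smul_left, hy₀, hvv]; ring
      rw [this]
      have : y₀ + s₀ • v - s₀ • v - y₀ = 0 := by abel
      rw [this, norm_zero]
      positivity
    · have : ⟪y₀ + s₀ • v, v⟫ = s₀ := by
        rw [inner_add_left, real_inner_smul_left, hy₀, hvv]; ring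
      rw [this, sub_self, abs_zero]
      linarith
  have hmap : ∀ (c : E3) (r : ℝ), Measure.map (projPerp v) μ (closedBall c r)
      = μ (projPerp v ⁻¹' closedBall c r) :=
    fun c r => Measure.map_apply measurable_projPerp measurableSet_closedBall
  -- projection of the neighborhood of the tube
  have hsubslab : ∀ k : ℕ, {x : E3 | infDist x T < ((k : ℝ) + 1) * ρ} ⊆
      projPerp v ⁻¹' closedBall y₀ ((C₁ + (k : ℝ) + 1) * ρ) := by
    intro k x hx
    simp only [mem_setOf_eq] at hx
    obtain ⟨t, htT, hdist⟩ := (infDist_lt_iff hTne).mp hx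
    simp only [mem_preimage, mem_closedBall, dist_eq_norm]
    have hdecomp : projPerp v x - y₀ = projPerp v (x - t) + (projPerp v t - y₀) := by
      rw [projPerp_sub]; abel
    have h1 : ‖projPerp v (x - t)‖ ≤ ‖x - t‖ := norm_projPerp_le hv _
    have h2 : ‖projPerp v t - y₀‖ ≤ C₁ * ρ := htT.1
    have h3 : ‖x - t‖ < ((k : ℝ) + 1) * ρ := by rwa [← dist_eq_norm]
    calc ‖projPerp v x - y₀‖ ≤ ‖projPerp v (x - t)‖ + ‖projPerp v t - y₀‖ := by
          rw [hdecomp]; exact norm_add_le _ _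
      _ ≤ (C₁ + (k : ℝ) + 1) * ρ := by nlinarith
  -- measure of the slab
  have hslab : ∀ k : ℕ, μ {x : E3 | infDist x T < ((k : ℝ) + 1) * ρ} ≤
      ENNReal.ofReal (729 * Cproj * (C₁ + (k : ℝ) + 1) ^ 3 * ρ ^ β) := by
    intro k
    set m : ℝ := (C₁ + (k : ℝ) + 1) * ρ with hm
    have hm0 : 0 < m := by positivity
    have hX1 : (1 : ℝ) ≤ C₁ + (k : ℝ) + 1 := by
      have : (0:ℝ) ≤ (k : ℝ) := Nat.cast_nonneg k
      linarith
    refine le_trans (measure_mono (hsubslab k)) ?_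
    by_cases hm1 : m ≤ 1
    · have hp := hproj y₀ hy₀ m ⟨hm0, hm1⟩
      rw [hmap] at hp
      refine hp.trans (ENNReal.ofReal_le_ofReal ?_)
      have e1 : m ^ β = (C₁ + (k : ℝ) + 1) ^ β * ρ ^ β :=
        Real.mul_rpow (by linarith) hρ0.le
      have e2 : (C₁ + (k : ℝ) + 1) ^ β ≤ (C₁ + (k : ℝ) + 1) ^ (3 : ℝ) :=
        Real.rpow_le_rpow_of_exponent_le hX1 (by linarith)
      have e3 : (C₁ + (k : ℝ) + 1) ^ (3 : ℝ) = (C₁ + (k : ℝ) + 1) ^ (3 : ℕ) := by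
        rw [← Real.rpow_natCast (C₁ + (k : ℝ) + 1) 3]; norm_num
      have h4 : 0 ≤ ρ ^ β := Real.rpow_nonneg hρ0.le _
      have h5 : (C₁ + (k : ℝ) + 1) ^ β ≤ (C₁ + (k : ℝ) + 1) ^ (3 : ℕ) := e3 ▸ e2
      have h6 : (0:ℝ) ≤ (C₁ + (k : ℝ) + 1) ^ (3 : ℕ) := by positivity
      rw [e1]
      calc Cproj * ((C₁ + (k : ℝ) + 1) ^ β * ρ ^ β)
          ≤ Cproj * ((C₁ + (k : ℝ) + 1) ^ (3:ℕ) * ρ ^ β) :=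
            mul_le_mul_of_nonneg_left (mul_le_mul_of_nonneg_right h5 h4) hCproj.le
        _ ≤ 729 * Cproj * (C₁ + (k : ℝ) + 1) ^ 3 * ρ ^ β := by
            nlinarith [mul_nonneg (mul_nonneg hCproj.le h6) h4]
    · push_neg at hm1
      have hone : ∀ c : E3, ⟪c, v⟫ = 0 → μ (projPerp v ⁻¹' closedBall c 1) ≤
          ENNReal.ofReal Cproj := by
        intro c hc
        have := hproj c hc 1 ⟨one_pos, le_refl 1⟩
        rw [hmap] at this
        simpa [Real.one_rpow] using this
      have := cover_bound hv μ (ENNReal.ofReal Cproj) hone y₀ hy₀ m hm1.le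
      refine this.trans ?_
      rw [← ENNReal.ofReal_mul (by positivity)]
      refine ENNReal.ofReal_le_ofReal ?_
      have e4 : ρ ^ (3 : ℕ) ≤ ρ ^ β := by
        have : ρ ^ (3 : ℝ) ≤ ρ ^ β := Real.rpow_le_rpow_of_exponent_ge hρ0 hρ1 (by linarith)
        rwa [show (3:ℝ) = ((3:ℕ):ℝ) by norm_num, Real.rpow_natCast] at this
      have e5 : m ^ 3 = (C₁ + (k : ℝ) + 1) ^ 3 * ρ ^ 3 := mul_pow _ _ 3
      rw [e5]
      have h6 : (0:ℝ) ≤ (C₁ + (k : ℝ) + 1) ^ 3 := by positivity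
      calc 729 * ((C₁ + (k : ℝ) + 1) ^ 3 * ρ ^ 3) * Cproj
          = 729 * Cproj * (C₁ + (k : ℝ) + 1) ^ 3 * ρ ^ (3:ℕ) := by ring
        _ ≤ 729 * Cproj * (C₁ + (k : ℝ) + 1) ^ 3 * ρ ^ β :=
            mul_le_mul_of_nonneg_left e4 (by positivity)
  -- indicator decomposition
  set dT : E3 → ℝ := fun x => infDist x T with hdT
  set Ek : ℕ → Set E3 := fun k => dT ⁻¹' Ico ((k : ℝ) * ρ) (((k : ℝ) + 1) * ρ) with hEk
  have hEkmeas : ∀ k, MeasurableSet (Ek k) := fun k =>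
    (continuous_infDist_pt T).measurable measurableSet_Ico
  set bk : ℕ → ℝ≥0∞ := fun k =>
    ENNReal.ofReal ((A * ρ⁻¹ * ((k : ℝ) + 1) ^ (-N)) ^ 2) with hbk
  have hpt : ∀ x : E3, ((‖φ x‖₊ : ℝ≥0∞)) ^ 2 ≤ ∑' k, (Ek k).indicator (fun _ => bk k) x := by
    intro x
    have hd0 : 0 ≤ dT x := infDist_nonneg
    set k : ℕ := ⌊dT x / ρ⌋₊ with hk
    have hk1 : (k : ℝ) ≤ dT x / ρ := Nat.floor_le (by positivity)
    have hk2 : dT x / ρ < (k : ℝ) + 1 := Nat.lt_floor_add_one _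
    have hxk : x ∈ Ek k := by
      simp only [hEk, mem_preimage, mem_Ico]
      constructor
      · exact (le_div_iff₀ hρ0).mp hk1
      · exact (div_lt_iff₀ hρ0).mp hk2
    refine le_trans ?_ (ENNReal.le_tsum k)
    rw [indicator_of_mem hxk]
    have hb1 : ‖φ x‖ ≤ A * ρ⁻¹ * ((k : ℝ) + 1) ^ (-N) := by
      refine (hφb x).trans ?_
      have hbase : (k : ℝ) + 1 ≤ 1 + dT x / ρ := by linarith
      have hmono := Real.rpow_le_rpow_of_nonpos (by positivity) hbase (by linarith : -N ≤ 0)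
      exact mul_le_mul_of_nonneg_left hmono (by positivity)
    calc ((‖φ x‖₊ : ℝ≥0∞)) ^ 2 = (ENNReal.ofReal ‖φ x‖) ^ 2 := by
          rw [ofReal_norm]; rfl
      _ ≤ (ENNReal.ofReal (A * ρ⁻¹ * ((k : ℝ) + 1) ^ (-N))) ^ 2 := by
          gcongr
      _ = bk k := by rw [← ENNReal.ofReal_pow (by positivity)]
  have hEslab : ∀ k : ℕ, μ (Ek k) ≤
      ENNReal.ofReal (729 * Cproj * (C₁ + (k : ℝ) + 1) ^ 3 * ρ ^ β) := by
    intro k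
    refine le_trans (measure_mono ?_) (hslab k)
    intro x hx
    simp only [hEk, mem_preimage, mem_Ico] at hx
    exact hx.2
  have hterm : ∀ k : ℕ,
      (A * ρ⁻¹ * ((k : ℝ) + 1) ^ (-N)) ^ 2 * (729 * Cproj * (C₁ + (k : ℝ) + 1) ^ 3 * ρ ^ β)
      ≤ 5832 * C₁ ^ 3 * (A ^ 2 * Cproj * ρ ^ (β - 2)) * ((k : ℝ) + 1) ^ (3 - 2 * N) := by
    intro k
    set x : ℝ := (k : ℝ) + 1 with hx
    have hk0 : (0:ℝ) ≤ (k : ℝ) := Nat.cast_nonneg k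
    have hx1 : (1:ℝ) ≤ x := by rw [hx]; linarith
    have hxpos : (0:ℝ) < x := by linarith
    have h3 : (C₁ + (k : ℝ) + 1) ^ 3 ≤ 8 * C₁ ^ 3 * x ^ 3 := by
      have hle : C₁ + (k : ℝ) + 1 ≤ 2 * C₁ * x := by nlinarith
      have hcube := pow_le_pow_left₀ (by positivity) hle 3
      calc (C₁ + (k : ℝ) + 1) ^ 3 ≤ (2 * C₁ * x) ^ 3 := hcube
        _ = 8 * C₁ ^ 3 * x ^ 3 := by ring
    have h4 : (x ^ (-N)) ^ 2 * x ^ (3:ℕ) = x ^ (3 - 2 * N) := by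
      rw [sq, ← Real.rpow_natCast x 3, ← Real.rpow_add hxpos, ← Real.rpow_add hxpos]
      congr 1
      push_cast
      ring
    have h5 : ρ ^ (β - 2) = ρ ^ β * (ρ⁻¹) ^ 2 := by
      rw [show β - 2 = β + (-2:ℝ) by ring, Real.rpow_add hρ0]
      congr 1
      rw [show (-2:ℝ) = -(2:ℝ) by norm_num, Real.rpow_neg hρ0.le,
        show (2:ℝ) = ((2:ℕ):ℝ) by norm_num, Real.rpow_natCast, inv_pow]
    rw [h5, ← h4]
    have hQ : (0:ℝ) ≤ 729 * A ^ 2 * (ρ⁻¹) ^ 2 * (x ^ (-N)) ^ 2 * Cproj * ρ ^ β := by positivity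
    calc (A * ρ⁻¹ * x ^ (-N)) ^ 2 * (729 * Cproj * (C₁ + (k : ℝ) + 1) ^ 3 * ρ ^ β)
        = (729 * A ^ 2 * (ρ⁻¹) ^ 2 * (x ^ (-N)) ^ 2 * Cproj * ρ ^ β) * (C₁ + (k : ℝ) + 1) ^ 3 := by
          ring
      _ ≤ (729 * A ^ 2 * (ρ⁻¹) ^ 2 * (x ^ (-N)) ^ 2 * Cproj * ρ ^ β) * (8 * C₁ ^ 3 * x ^ 3) :=
          mul_le_mul_of_nonneg_left h3 hQ
      _ = 5832 * C₁ ^ 3 * (A ^ 2 * Cproj * (ρ ^ β * (ρ⁻¹) ^ 2)) * ((x ^ (-N)) ^ 2 * x ^ (3:ℕ)) := by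
          ring
  have hmain : ∀ k : ℕ, bk k * μ (Ek k) ≤
      ENNReal.ofReal (5832 * C₁ ^ 3 * (A ^ 2 * Cproj * ρ ^ (β - 2)) * ((k : ℝ) + 1) ^ (3 - 2 * N)) := by
    intro k
    calc bk k * μ (Ek k)
        ≤ bk k * ENNReal.ofReal (729 * Cproj * (C₁ + (k : ℝ) + 1) ^ 3 * ρ ^ β) :=
          mul_le_mul_right (hEslab k) _
      _ = ENNReal.ofReal ((A * ρ⁻¹ * ((k : ℝ) + 1) ^ (-N)) ^ 2 *
            (729 * Cproj * (C₁ + (k : ℝ) + 1) ^ 3 * ρ ^ β)) := by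
          rw [show bk k = ENNReal.ofReal ((A * ρ⁻¹ * ((k : ℝ) + 1) ^ (-N)) ^ 2) from rfl,
            ← ENNReal.ofReal_mul (by positivity)]
      _ ≤ _ := ENNReal.ofReal_le_ofReal (hterm k)
  have hsum2 : Summable (fun k : ℕ =>
      5832 * C₁ ^ 3 * (A ^ 2 * Cproj * ρ ^ (β - 2)) * ((k : ℝ) + 1) ^ (3 - 2 * N)) :=
    hsummable.mul_left _
  have h7 : (0:ℝ) ≤ A ^ 2 * Cproj * ρ ^ (β - 2) := by positivity
  calc ∫⁻ x, ((‖φ x‖₊ : ℝ≥0∞)) ^ 2 ∂μ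
      ≤ ∫⁻ x, ∑' k, (Ek k).indicator (fun _ => bk k) x ∂μ := lintegral_mono hpt
    _ = ∑' k, ∫⁻ x, (Ek k).indicator (fun _ => bk k) x ∂μ :=
        lintegral_tsum fun k => (measurable_const.indicator (hEkmeas k)).aemeasurable
    _ = ∑' k, bk k * μ (Ek k) :=
        tsum_congr fun k => lintegral_indicator_const (hEkmeas k) _
    _ ≤ ∑' k : ℕ, ENNReal.ofReal (5832 * C₁ ^ 3 * (A ^ 2 * Cproj * ρ ^ (β - 2)) *
          ((k : ℝ) + 1) ^ (3 - 2 * N)) := ENNReal.tsum_le_tsum hmain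
    _ = ENNReal.ofReal (∑' k : ℕ, 5832 * C₁ ^ 3 * (A ^ 2 * Cproj * ρ ^ (β - 2)) *
          ((k : ℝ) + 1) ^ (3 - 2 * N)) :=
        (ENNReal.ofReal_tsum_of_nonneg (fun k => by positivity) hsum2).symm
    _ ≤ ENNReal.ofReal (max 1 (5832 * C₁ ^ 3 * S) * A ^ 2 * Cproj * ρ ^ (β - 2)) := by
        refine ENNReal.ofReal_le_ofReal ?_
        rw [tsum_mul_left, ← hS]
        calc 5832 * C₁ ^ 3 * (A ^ 2 * Cproj * ρ ^ (β - 2)) * S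
            = (5832 * C₁ ^ 3 * S) * (A ^ 2 * Cproj * ρ ^ (β - 2)) := by ring
          _ ≤ max 1 (5832 * C₁ ^ 3 * S) * (A ^ 2 * Cproj * ρ ^ (β - 2)) :=
              mul_le_mul_of_nonneg_right (le_max_right _ _) h7
          _ = max 1 (5832 * C₁ ^ 3 * S) * A ^ 2 * Cproj * ρ ^ (β - 2) := by ring
end
end
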